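/- arXiv:1201.3731 — 5 statements merged into one kernel-verified Lean document; each statement's English description precedes it below -/
import Mathlib

section
/- Weak Rolle: if a < b and P(a) = 0 and P(b) = 0 for a polynomial P over a real closed field, then there exists c in the open interval (a,b) such that P'(c) = 0 or P(c) = 0. -/
open Polynomial

/-- A discrete real closed field: an ordered field in which the intermediate
value property holds for polynomials. -/
class RealClosedFieldIVT (R : Type*) [Field R] [LinearOrder R] [IsStrictOrderedRing R] : Prop where
  ivt : ∀ (p : Polynomial R) (a b : R), a ≤ b → p.eval a ≤ 0 → 0 ≤ p.eval b →
    ∃ x ∈ Set.Icc a b, p.eval x = 0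

section Aux

variable {R : Type*} [Field R] [LinearOrder R] [IsStrictOrderedRing R] [RealClosedFieldIVT R]

/-- IVT with the opposite sign configuration. -/
lemma rolle_ivt_sign (p : Polynomial R) {a b : R} (hab : a ≤ b) (ha : 0 ≤ p.eval a)
    (hb : p.eval b ≤ 0) : ∃ x ∈ Set.Icc a b, p.eval x = 0 := by
  obtain ⟨x, hx, he⟩ := RealClosedFieldIVT.ivt (-p) a b hab (by simpa) (by simpa)
  exact ⟨x, hx, by simpa using he⟩

/-- If a polynomial has no root on an open interval and is positive at one
point of it, it is positive on the whole interval. -/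
lemma rolle_sign_const (f : Polynomial R) {a b : R}
    (h : ∀ x ∈ Set.Ioo a b, f.eval x ≠ 0)
    {m : R} (hm : m ∈ Set.Ioo a b) (hfm : 0 < f.eval m) :
    ∀ x ∈ Set.Ioo a b, 0 < f.eval x := by
  intro x hx
  rcases lt_trichotomy (f.eval x) 0 with hneg | h0 | hpos
  · exfalso
    rcases lt_trichotomy x m with hxm | rfl | hmx
    · obtain ⟨r, hr, hr0⟩ := RealClosedFieldIVT.ivt f x m hxm.le hneg.le hfm.le
      exact h r ⟨hx.1.trans_le hr.1, hr.2.trans_lt hm.2⟩ hr0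
    · linarith
    · obtain ⟨r, hr, hr0⟩ := rolle_ivt_sign f hmx.le hfm.le hneg.le
      exact h r ⟨hm.1.trans_le hr.1, hr.2.trans_lt hx.2⟩ hr0
  · exact absurd h0 (h x hx)
  · exact hpos

/-- If a polynomial is negative on `(a,b)` then its value at `b` is `≤ 0`. -/
lemma rolle_boundary_nonpos (f : Polynomial R) {a b : R} (hab : a < b)
    (h : ∀ x ∈ Set.Ioo a b, f.eval x < 0) : f.eval b ≤ 0 := by
  by_contra hb
  push_neg at hb
  have hm : (a + b) / 2 ∈ Set.Ioo a b := ⟨by linarith, by linarith⟩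
  obtain ⟨r, hr, hr0⟩ :=
    RealClosedFieldIVT.ivt f ((a + b) / 2) b hm.2.le (h _ hm).le hb.le
  have hrb : r ≠ b := fun h' => by rw [h'] at hr0; linarith
  exact absurd hr0 (h r ⟨hm.1.trans_le hr.1, lt_of_le_of_ne hr.2 hrb⟩).ne

/-- If a polynomial is positive on `(a,b)` then its value at `b` is `≥ 0`. -/
lemma rolle_boundary_nonneg (f : Polynomial R) {a b : R} (hab : a < b)
    (h : ∀ x ∈ Set.Ioo a b, 0 < f.eval x) : 0 ≤ f.eval b := by
  have := rolle_boundary_nonpos (-f) hab (fun x hx => by simpa using h x hx)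
  simpa using this

/-- Key contradiction lemma: a polynomial cannot be positive with positive
derivative on `(a,b)` while vanishing at `b`. Induction on the degree. -/
lemma rolle_key : ∀ (n : ℕ) (P : Polynomial R), P.natDegree ≤ n →
    ∀ a b : R, a < b → P.eval b = 0 →
    (∀ x ∈ Set.Ioo a b, 0 < P.eval x) →
    (∀ x ∈ Set.Ioo a b, 0 < (derivative P).eval x) → False := by
  intro n
  induction n using Nat.strong_induction_on with
  | _ n IH =>
    intro P hn a b hab hb hpos hpos'
    have hm : (a + b) / 2 ∈ Set.Ioo a b := ⟨by linarith, by linarith⟩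
    -- b is a root of P, divide
    set T : Polynomial R := P /ₘ (X - C b) with hTdef
    have hT : (X - C b) * T = P := (mul_divByMonic_eq_iff_isRoot).2 hb
    have hd : derivative P = T + (X - C b) * derivative T := by
      conv_lhs => rw [← hT]
      rw [derivative_mul, derivative_X_sub_C, one_mul]
    have hTneg : ∀ x ∈ Set.Ioo a b, T.eval x < 0 := by
      intro x hx
      have h1 : 0 < P.eval x := hpos x hx
      rw [← hT] at h1
      simp only [eval_mul, eval_sub, eval_X, eval_C] at h1
      have hxb : x - b < 0 := by linarith [hx.2]
      nlinarith
    -- T(b) = P'(b) and both sign bounds give T(b) = 0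
    have hTb_nonpos : T.eval b ≤ 0 := rolle_boundary_nonpos T hab hTneg
    have hdb : (derivative P).eval b = T.eval b := by
      rw [hd]; simp
    have hTb_nonneg : 0 ≤ T.eval b := by
      rw [← hdb]; exact rolle_boundary_nonneg _ hab hpos'
    have hTb : T.eval b = 0 := le_antisymm hTb_nonpos hTb_nonneg
    -- divide again
    set U : Polynomial R := T /ₘ (X - C b) with hUdef
    have hU : (X - C b) * U = T := (mul_divByMonic_eq_iff_isRoot).2 hTb
    have hUpos : ∀ x ∈ Set.Ioo a b, 0 < U.eval x := by
      intro x hx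
      have h1 : T.eval x < 0 := hTneg x hx
      rw [← hU] at h1
      simp only [eval_mul, eval_sub, eval_X, eval_C] at h1
      have hxb : x - b < 0 := by linarith [hx.2]
      nlinarith
    have hdT : derivative T = U + (X - C b) * derivative U := by
      conv_lhs => rw [← hU]
      rw [derivative_mul, derivative_X_sub_C, one_mul]
    -- the auxiliary polynomial V
    set V : Polynomial R := C 2 * U + (X - C b) * derivative U with hVdef
    have hdx : ∀ x : R, (derivative P).eval x = (x - b) * V.eval x := by
      intro x
      rw [hd, hdT, ← hU, hVdef]
      simp only [eval_add, eval_mul, eval_sub, eval_X, eval_C]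
      ring
    have hVneg : ∀ x ∈ Set.Ioo a b, V.eval x < 0 := by
      intro x hx
      have h1 := hpos' x hx
      rw [hdx x] at h1
      have hxb : x - b < 0 := by linarith [hx.2]
      nlinarith
    have hU'pos : ∀ x ∈ Set.Ioo a b, 0 < (derivative U).eval x := by
      intro x hx
      have h1 := hVneg x hx
      rw [hVdef] at h1
      simp only [eval_add, eval_mul, eval_sub, eval_X, eval_C] at h1
      have h2 := hUpos x hx
      have hxb : x - b < 0 := by linarith [hx.2]
      nlinarith
    -- U(b) = 0
    have hVb : V.eval b ≤ 0 := rolle_boundary_nonpos V hab hVneg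
    have hUb_nonpos : U.eval b ≤ 0 := by
      rw [hVdef] at hVb
      simp only [eval_add, eval_mul, eval_sub, eval_X, eval_C, sub_self, zero_mul,
        add_zero] at hVb
      linarith
    have hUb : U.eval b = 0 :=
      le_antisymm hUb_nonpos (rolle_boundary_nonneg U hab hUpos)
    -- degree bookkeeping
    have hUne : U ≠ 0 := by
      intro h
      have := hUpos _ hm
      rw [h] at this
      simp at this
    have hXb : (X - C b : Polynomial R) ≠ 0 := X_sub_C_ne_zero b
    have hdeg : P.natDegree = U.natDegree + 2 := by
      rw [← hT, ← hU, natDegree_mul hXb (mul_ne_zero hXb hUne),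
        natDegree_mul hXb hUne, natDegree_X_sub_C]
      ring
    exact IH U.natDegree (by omega) U le_rfl a b hab hUb hUpos hU'pos

/-- Mirror version of `rolle_key`: negative derivative, vanishing at `a`. -/
lemma rolle_key' (P : Polynomial R) (a b : R) (hab : a < b) (ha : P.eval a = 0)
    (hpos : ∀ x ∈ Set.Ioo a b, 0 < P.eval x)
    (hneg : ∀ x ∈ Set.Ioo a b, (derivative P).eval x < 0) : False := by
  set Q : Polynomial R := P.comp (C (a + b) - X) with hQ
  have hQe : ∀ x : R, Q.eval x = P.eval (a + b - x) := by
    intro x; simp [hQ, eval_comp]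
  have hQd : ∀ x : R, (derivative Q).eval x = -((derivative P).eval (a + b - x)) := by
    intro x
    rw [hQ, derivative_comp]
    simp [eval_comp]
  refine rolle_key Q.natDegree Q le_rfl a b hab ?_ ?_ ?_
  · rw [hQe]; simpa using ha
  · intro x hx
    rw [hQe]
    exact hpos _ ⟨by linarith [hx.2], by linarith [hx.1]⟩
  · intro x hx
    rw [hQd]
    have := hneg (a + b - x) ⟨by linarith [hx.2], by linarith [hx.1]⟩
    linarith

/-- Weak Rolle when `P` is positive at the midpoint. -/
lemma rolle_aux (P : Polynomial R) (a b : R) (hab : a < b) (ha : P.eval a = 0)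
    (hb : P.eval b = 0) (hm : 0 < P.eval ((a + b) / 2)) :
    ∃ c ∈ Set.Ioo a b, (derivative P).eval c = 0 ∨ P.eval c = 0 := by
  have hmIoo : (a + b) / 2 ∈ Set.Ioo a b := ⟨by linarith, by linarith⟩
  by_cases hroot : ∃ c ∈ Set.Ioo a b, P.eval c = 0
  · obtain ⟨c, hc, h0⟩ := hroot
    exact ⟨c, hc, Or.inr h0⟩
  push_neg at hroot
  have hPpos := rolle_sign_const P hroot hmIoo hm
  by_cases hroot' : ∃ c ∈ Set.Ioo a b, (derivative P).eval c = 0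
  · obtain ⟨c, hc, h0⟩ := hroot'
    exact ⟨c, hc, Or.inl h0⟩
  push_neg at hroot'
  exfalso
  rcases (hroot' _ hmIoo).lt_or_gt with hneg | hpos
  · have h1 := rolle_sign_const (-(derivative P))
      (fun x hx => by simpa using hroot' x hx) hmIoo (by simpa using hneg)
    refine rolle_key' P a b hab ha hPpos (fun x hx => ?_)
    have := h1 x hx
    simp only [eval_neg] at this
    linarith
  · have h1 := rolle_sign_const (derivative P) hroot' hmIoo hpos
    exact rolle_key P.natDegree P le_rfl a b hab hb hPpos h1

end Aux

/-- Weak Rolle: between two roots of `P` there is a root of `P'` or of `P`. -/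
theorem rolle_weak {R : Type*} [Field R] [LinearOrder R] [IsStrictOrderedRing R] [RealClosedFieldIVT R]
    (P : Polynomial R) (a b : R) (hab : a < b)
    (ha : P.eval a = 0) (hb : P.eval b = 0) :
    ∃ c ∈ Set.Ioo a b, (Polynomial.derivative P).eval c = 0 ∨ P.eval c = 0 := by
  rcases lt_trichotomy (P.eval ((a + b) / 2)) 0 with h | h | h
  · obtain ⟨c, hc, hor⟩ := rolle_aux (-P) a b hab (by simp [ha]) (by simp [hb])
      (by simp only [eval_neg]; linarith)
    refine ⟨c, hc, ?_⟩
    rcases hor with h1 | h1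
    · left
      simpa using h1
    · right
      simpa using h1
  · exact ⟨(a + b) / 2, ⟨by linarith, by linarith⟩, Or.inr h⟩
  · exact rolle_aux P a b hab ha hb h
end

section
/- Rolle's theorem for polynomials: if a < b and P(a) = P(b), then there exists c in the open interval (a,b) with P'(c) = 0. -/
open Polynomial

lemma ivt_signs {R : Type*} [Field R] [LinearOrder R] [IsStrictOrderedRing R] [RealClosedFieldIVT R]
    (p : Polynomial R) (a b : R) (hab : a ≤ b) (h : p.eval a * p.eval b ≤ 0) :
    ∃ x ∈ Set.Icc a b, p.eval x = 0 := by
  rcases le_or_gt (p.eval a) 0 with h1 | h1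
  · rcases le_or_gt 0 (p.eval b) with h2 | h2
    · exact RealClosedFieldIVT.ivt p a b hab h1 h2
    · rcases eq_or_lt_of_le h1 with he | h1
      · exact ⟨a, ⟨le_refl a, hab⟩, he⟩
      · nlinarith
  · rcases le_or_gt (p.eval b) 0 with h2 | h2
    · obtain ⟨x, hx, hx0⟩ := RealClosedFieldIVT.ivt (-p) a b hab
        (by simpa using h1.le) (by simpa using h2)
      exact ⟨x, hx, by simpa using hx0⟩
    · nlinarith

/-- Rolle's theorem for polynomials over a real closed field. -/
theorem poly_rolle {R : Type*} [Field R] [LinearOrder R] [IsStrictOrderedRing R] [RealClosedFieldIVT R]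
    (P : Polynomial R) (a b : R) (hab : a < b) (hP : P.eval a = P.eval b) :
    ∃ c ∈ Set.Ioo a b, (Polynomial.derivative P).eval c = 0 := by
  set Q : Polynomial R := P - C (P.eval a) with hQdef
  have hQa : Q.eval a = 0 := by simp [hQdef]
  have hQb : Q.eval b = 0 := by simp [hQdef, ← hP]
  have hdQ : derivative Q = derivative P := by simp [hQdef]
  by_cases hQ0 : Q = 0
  · refine ⟨(a + b) / 2, ⟨by linarith, by linarith⟩, ?_⟩
    rw [← hdQ, hQ0]; simp
  -- least root of Q in (a, b]
  have hbroot : b ∈ Q.roots := (mem_roots hQ0).mpr hQb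
  set F := Q.roots.toFinset.filter (fun x => a < x ∧ x ≤ b) with hF
  have hbF : b ∈ F := by
    simp only [hF, Finset.mem_filter, Multiset.mem_toFinset]
    exact ⟨hbroot, hab, le_refl b⟩
  have hFne : F.Nonempty := ⟨b, hbF⟩
  set b' := F.min' hFne with hb'def
  have hb'F : b' ∈ F := F.min'_mem hFne
  have hb'mem : Q.eval b' = 0 ∧ a < b' ∧ b' ≤ b := by
    simp only [hF, Finset.mem_filter, Multiset.mem_toFinset] at hb'F
    exact ⟨(mem_roots hQ0).mp hb'F.1, hb'F.2⟩
  obtain ⟨hQb', hab', hb'b⟩ := hb'mem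
  have hmin : ∀ x, a < x → x < b' → Q.eval x ≠ 0 := by
    intro x hax hxb' hx0
    have hxF : x ∈ F := by
      simp only [hF, Finset.mem_filter, Multiset.mem_toFinset]
      exact ⟨(mem_roots hQ0).mpr hx0, hax, le_trans hxb'.le hb'b⟩
    exact absurd (F.min'_le x hxF) (not_le.mpr hxb')
  -- factor out (X - a)^m
  set m := rootMultiplicity a Q with hm
  set S₁ := Q /ₘ (X - C a) ^ m with hS₁
  have hfac1 : (X - C a) ^ m * S₁ = Q := pow_mul_divByMonic_rootMultiplicity_eq Q a
  have hS₁a : S₁.eval a ≠ 0 := eval_divByMonic_pow_rootMultiplicity_ne_zero a hQ0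
  have hm0 : 0 < m := (rootMultiplicity_pos hQ0).mpr hQa
  have hS₁0 : S₁ ≠ 0 := by
    intro h; apply hQ0; rw [← hfac1, h, mul_zero]
  have hS₁b' : S₁.eval b' = 0 := by
    have := hQb'
    rw [← hfac1] at this
    simp only [eval_mul, eval_pow, eval_sub, eval_X, eval_C] at this
    rcases mul_eq_zero.mp this with h | h
    · exact absurd h (pow_ne_zero _ (sub_ne_zero.mpr (ne_of_gt hab')))
    · exact h
  -- factor out (X - b')^n
  set n := rootMultiplicity b' S₁ with hn
  set S := S₁ /ₘ (X - C b') ^ n with hS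
  have hfac2 : (X - C b') ^ n * S = S₁ := pow_mul_divByMonic_rootMultiplicity_eq S₁ b'
  have hSb' : S.eval b' ≠ 0 := eval_divByMonic_pow_rootMultiplicity_ne_zero b' hS₁0
  have hn0 : 0 < n := (rootMultiplicity_pos hS₁0).mpr hS₁b'
  have hSa : S.eval a ≠ 0 := by
    intro h
    apply hS₁a
    rw [← hfac2]
    simp [h]
  obtain ⟨m', hm'⟩ : ∃ m', m = m' + 1 := ⟨m - 1, (Nat.succ_pred_eq_of_pos hm0).symm⟩
  obtain ⟨n', hn'⟩ : ∃ n', n = n' + 1 := ⟨n - 1, (Nat.succ_pred_eq_of_pos hn0).symm⟩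
  set A : Polynomial R := X - C a with hA
  set B : Polynomial R := X - C b' with hB
  set T : Polynomial R := C ((m : R)) * B * S + C ((n : R)) * A * S + A * B * derivative S
    with hT
  have hQfac : Q = A ^ m * (B ^ n * S) := by rw [hfac2, hfac1]
  have hdfac : derivative Q = A ^ m' * B ^ n' * T := by
    rw [hQfac, hm', hn', hT, hm', hn']
    simp only [derivative_mul, derivative_pow, derivative_X_sub_C, hA, hB]
    push_cast
    ring
  -- sign analysis
  have hsign : 0 < S.eval a * S.eval b' := by
    rcases lt_trichotomy (S.eval a * S.eval b') 0 with h | h | h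
    · exfalso
      obtain ⟨x, ⟨hx1, hx2⟩, hx0⟩ := ivt_signs S a b' hab'.le h.le
      have hxa : x ≠ a := fun he => hSa (he ▸ hx0)
      have hxb : x ≠ b' := fun he => hSb' (he ▸ hx0)
      refine hmin x (lt_of_le_of_ne hx1 (Ne.symm hxa)) (lt_of_le_of_ne hx2 hxb) ?_
      rw [hQfac]
      simp [hx0]
    · exact absurd h (mul_ne_zero hSa hSb')
    · exact h
  have hTa : T.eval a = (m : R) * (a - b') * S.eval a := by
    simp [hT, hA, hB]
  have hTb : T.eval b' = (n : R) * (b' - a) * S.eval b' := by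
    simp [hT, hA, hB]
  have hmR : 0 < (m : R) := by exact_mod_cast hm0
  have hnR : 0 < (n : R) := by exact_mod_cast hn0
  have hprod : T.eval a * T.eval b' < 0 := by
    rw [hTa, hTb]
    have h1 : a - b' < 0 := by linarith
    have h2 : 0 < b' - a := by linarith
    nlinarith [mul_pos (mul_pos (mul_pos hmR hnR) (mul_pos h2 h2)) hsign]
  obtain ⟨c, ⟨hc1, hc2⟩, hc0⟩ := ivt_signs T a b' hab'.le hprod.le
  have hca : c ≠ a := by
    intro he
    have h0 : T.eval a = 0 := he ▸ hc0
    rw [h0, zero_mul] at hprod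
    exact absurd hprod (lt_irrefl 0)
  have hcb : c ≠ b' := by
    intro he
    have h0 : T.eval b' = 0 := he ▸ hc0
    rw [h0, mul_zero] at hprod
    exact absurd hprod (lt_irrefl 0)
  refine ⟨c, ⟨lt_of_le_of_ne hc1 (Ne.symm hca), lt_of_lt_of_le (lt_of_le_of_ne hc2 hcb) hb'b⟩, ?_⟩
  rw [← hdQ, hdfac]
  simp [hc0]
end

section
/- Sign at the right of a point: for a polynomial P over a real closed field and a point x, there exists δ > 0 such that for all y with x < y < x + δ, sign(P(y)) equals the sign at x of the first successive derivative of P that does not vanish at x (and is 0 if all derivatives of P vanish at x, i.e., P = 0). -/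
open Polynomial

variable {R : Type*} [Field R] [LinearOrder R] [IsStrictOrderedRing R]

/-- Auxiliary fuelled recursion for the sign at the right of a point:
the sign at `x` of the first successive derivative of `p` not vanishing at `x`. -/
noncomputable def sgpRightAux : ℕ → Polynomial R → R → SignType
  | 0, _, _ => 0
  | (n + 1), p, x =>
    if p = 0 then 0
    else if p.eval x ≠ 0 then SignType.sign (p.eval x)
    else sgpRightAux n (Polynomial.derivative p) x

/-- The sign of `p` immediately to the right of `x`: `sign (p.eval x)` if
`p.eval x ≠ 0`, `0` if `p = 0`, and otherwise the right-sign of `p'` at `x`.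
(The fuel `p.natDegree + 1` suffices to unfold this recursion completely.) -/
noncomputable def sgpRight (p : Polynomial R) (x : R) : SignType :=
  sgpRightAux (p.natDegree + 1) p x

lemma natDegree_pos_of_eval_eq_zero {p : Polynomial R} (hp : p ≠ 0) {x : R}
    (hx : p.eval x = 0) : p.natDegree ≠ 0 := by
  intro h
  rw [Polynomial.eq_C_of_natDegree_eq_zero h] at hx hp
  simp at hx
  simp [hx] at hp

lemma sgpRightAux_eq_sgpRight (n : ℕ) (p : Polynomial R) (x : R)
    (h : p.natDegree < n) : sgpRightAux n p x = sgpRight p x := by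
  induction n using Nat.strong_induction_on generalizing p with
  | _ n ih =>
    match n with
    | 0 => omega
    | k + 1 =>
      by_cases h0 : p = 0
      · subst h0; simp [sgpRight, sgpRightAux]
      by_cases he : p.eval x = 0
      · have hnd : p.natDegree ≠ 0 := natDegree_pos_of_eval_eq_zero h0 he
        have hd : (Polynomial.derivative p).natDegree < p.natDegree :=
          Polynomial.natDegree_derivative_lt hnd
        rw [show sgpRightAux (k+1) p x = sgpRightAux k (Polynomial.derivative p) x by
              simp [sgpRightAux, h0, he]]
        rw [show sgpRight p x = sgpRightAux p.natDegree (Polynomial.derivative p) x by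
              simp [sgpRight, sgpRightAux, h0, he]]
        rw [ih k (by omega) _ (by omega), ih p.natDegree (by omega) _ hd]
      · simp [sgpRight, sgpRightAux, h0, he]

lemma sgpRight_def (p : Polynomial R) (x : R) :
    sgpRight p x = if p = 0 then 0 else if p.eval x ≠ 0 then SignType.sign (p.eval x)
      else sgpRight (Polynomial.derivative p) x := by
  by_cases h0 : p = 0
  · subst h0; simp [sgpRight, sgpRightAux]
  by_cases he : p.eval x = 0
  · have hnd : p.natDegree ≠ 0 := natDegree_pos_of_eval_eq_zero h0 he
    have hd : (Polynomial.derivative p).natDegree < p.natDegree :=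
      Polynomial.natDegree_derivative_lt hnd
    rw [show sgpRight p x = sgpRightAux p.natDegree (Polynomial.derivative p) x by
          simp [sgpRight, sgpRightAux, h0, he]]
    rw [sgpRightAux_eq_sgpRight _ _ _ hd]
    simp [h0, he]
  · simp [sgpRight, sgpRightAux, h0, he]

lemma sgpRightAux_taylor (n : ℕ) (p : Polynomial R) (x : R) :
    sgpRightAux n (Polynomial.taylor x p) 0 = sgpRightAux n p x := by
  induction n generalizing p with
  | zero => rfl
  | succ k ih =>
    have h0 : Polynomial.taylor x p = 0 ↔ p = 0 := by
      constructor
      · intro h; exact Polynomial.taylor_injective x (by simpa using h)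
      · intro h; simp [h]
    have he : (Polynomial.taylor x p).eval 0 = p.eval x := by
      rw [Polynomial.taylor_eval]; ring_nf
    have hder : Polynomial.derivative (Polynomial.taylor x p)
        = Polynomial.taylor x (Polynomial.derivative p) := by
      simp [Polynomial.taylor_apply, Polynomial.derivative_comp]
    by_cases hp0 : p = 0
    · simp [sgpRightAux, hp0]
    by_cases hpe : p.eval x = 0
    · simp only [sgpRightAux, h0, hp0, if_neg, he, hpe, hder]
      simpa using ih (Polynomial.derivative p)
    · simp [sgpRightAux, h0, hp0, he, hpe]

lemma sgpRight_taylor (p : Polynomial R) (x : R) :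
    sgpRight (Polynomial.taylor x p) 0 = sgpRight p x := by
  rw [sgpRight, Polynomial.natDegree_taylor, sgpRightAux_taylor]
  rfl

lemma sgpRight_zero_eq_sign_trailingCoeff (q : Polynomial R) (hq : q ≠ 0) :
    sgpRight q 0 = SignType.sign q.trailingCoeff := by
  have H : ∀ n (q : Polynomial R), q.natDegree = n → q ≠ 0 →
      sgpRight q 0 = SignType.sign q.trailingCoeff := by
    intro n
    induction n using Nat.strong_induction_on with
    | _ n ih =>
    intro q hdeg hq
    subst hdeg
    rw [sgpRight_def]
    by_cases he : q.eval 0 = 0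
    · have hc0 : q.coeff 0 = 0 := by rwa [Polynomial.coeff_zero_eq_eval_zero]
      have hnd : q.natDegree ≠ 0 := natDegree_pos_of_eval_eq_zero hq he
      have hm : q.natTrailingDegree ≠ 0 := by
        rw [Ne, Polynomial.natTrailingDegree_eq_zero]
        push_neg
        exact ⟨hq, by simpa using hc0⟩
      set m := q.natTrailingDegree with hmdef
      have hcm : q.coeff m ≠ 0 := Polynomial.coeff_natTrailingDegree_ne_zero.mpr hq
      have hm1 : m - 1 + 1 = m := by omega
      have hd' : (Polynomial.derivative q).coeff (m - 1) = q.coeff m * (m : R) := by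
        rw [Polynomial.coeff_derivative, hm1]
        congr 1
        exact_mod_cast hm1
      have hmcast : (0:R) < (m : R) := by
        exact_mod_cast Nat.pos_of_ne_zero hm
      have hdc : (Polynomial.derivative q).coeff (m - 1) ≠ 0 := by
        rw [hd']; exact mul_ne_zero hcm (ne_of_gt hmcast)
      have hd0 : Polynomial.derivative q ≠ 0 := fun h => hdc (by simp [h])
      have hddeg : (Polynomial.derivative q).natDegree < q.natDegree :=
        Polynomial.natDegree_derivative_lt hnd
      have hntd : (Polynomial.derivative q).natTrailingDegree = m - 1 := by
        apply le_antisymm (Polynomial.natTrailingDegree_le_of_ne_zero hdc)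
        apply Polynomial.le_natTrailingDegree hd0
        intro k hk
        rw [Polynomial.coeff_derivative,
          Polynomial.coeff_eq_zero_of_lt_natTrailingDegree (by omega), zero_mul]
      rw [if_neg hq, if_neg (by simpa using he),
        ih _ hddeg _ rfl hd0]
      rw [Polynomial.trailingCoeff, hntd, hd', Polynomial.trailingCoeff, ← hmdef]
      rw [sign_mul, sign_pos hmcast, mul_one]
    · have hc0 : q.coeff 0 ≠ 0 := by rwa [Polynomial.coeff_zero_eq_eval_zero]
      have hntd : q.natTrailingDegree = 0 :=
        Polynomial.natTrailingDegree_eq_zero.mpr (Or.inr hc0)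
      rw [if_neg hq, if_pos (by simpa using he)]
      rw [Polynomial.trailingCoeff, hntd, Polynomial.coeff_zero_eq_eval_zero]
  exact H _ q rfl hq

lemma abs_eval_le (r : Polynomial R) {t : R} (ht0 : 0 ≤ t) (ht1 : t ≤ 1) :
    |r.eval t| ≤ ∑ i ∈ Finset.range (r.natDegree + 1), |r.coeff i| := by
  rw [Polynomial.eval_eq_sum_range]
  refine (Finset.abs_sum_le_sum_abs _ _).trans (Finset.sum_le_sum fun i _ => ?_)
  rw [abs_mul]
  calc |r.coeff i| * |t ^ i| ≤ |r.coeff i| * 1 := by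
        apply mul_le_mul_of_nonneg_left _ (abs_nonneg _)
        rw [abs_pow, abs_of_nonneg ht0]
        exact pow_le_one₀ ht0 ht1
    _ = |r.coeff i| := mul_one _

lemma sign_near (q : Polynomial R) (hq : q ≠ 0) :
    ∃ δ : R, 0 < δ ∧ ∀ t : R, 0 < t → t < δ →
      SignType.sign (q.eval t) = SignType.sign q.trailingCoeff := by
  have H : ∀ n (q : Polynomial R), q.natDegree = n → q ≠ 0 →
      ∃ δ : R, 0 < δ ∧ ∀ t : R, 0 < t → t < δ →
        SignType.sign (q.eval t) = SignType.sign q.trailingCoeff := by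
    intro n
    induction n using Nat.strong_induction_on with
    | _ n ih =>
    intro q hdeg hq
    subst hdeg
    by_cases hc0 : q.coeff 0 = 0
    · -- q = X * divX q
      have hdvx : q.divX ≠ 0 := by
        intro h
        rw [Polynomial.divX_eq_zero_iff] at h
        rw [h, hc0] at hq; simp at hq
      have hnd : q.natDegree ≠ 0 := by
        intro h
        rw [Polynomial.eq_C_of_natDegree_eq_zero h, hc0] at hq; simp at hq
      have hddeg : q.divX.natDegree < q.natDegree := by
        rw [Polynomial.natDegree_divX_eq_natDegree_tsub_one]; omega
      obtain ⟨δ, hδ, hsign⟩ := ih _ hddeg _ rfl hdvx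
      have hmne : q.natTrailingDegree ≠ 0 := by
        rw [Ne, Polynomial.natTrailingDegree_eq_zero]; push_neg
        exact ⟨hq, by simpa using hc0⟩
      have hcm : q.coeff q.natTrailingDegree ≠ 0 :=
        Polynomial.coeff_natTrailingDegree_ne_zero.mpr hq
      have hdc : q.divX.coeff (q.natTrailingDegree - 1) ≠ 0 := by
        rw [Polynomial.coeff_divX, show q.natTrailingDegree - 1 + 1 = q.natTrailingDegree by omega]
        exact hcm
      have hntd : q.divX.natTrailingDegree = q.natTrailingDegree - 1 := by
        apply le_antisymm (Polynomial.natTrailingDegree_le_of_ne_zero hdc)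
        apply Polynomial.le_natTrailingDegree hdvx
        intro k hk
        rw [Polynomial.coeff_divX]
        exact Polynomial.coeff_eq_zero_of_lt_natTrailingDegree (by omega)
      have htc : q.divX.trailingCoeff = q.trailingCoeff := by
        rw [Polynomial.trailingCoeff, hntd, Polynomial.coeff_divX,
          show q.natTrailingDegree - 1 + 1 = q.natTrailingDegree by omega]
        rfl
      refine ⟨δ, hδ, fun t ht0 htδ => ?_⟩
      have : q.eval t = t * q.divX.eval t := by
        conv_lhs => rw [← Polynomial.X_mul_divX_add q]
        simp [hc0]
      rw [this, sign_mul, sign_pos ht0, one_mul, hsign t ht0 htδ, htc]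
    · -- base case: bound argument
      set c := q.coeff 0 with hcdef
      set M := ∑ i ∈ Finset.range (q.divX.natDegree + 1), |q.divX.coeff i| with hMdef
      have hM0 : 0 ≤ M := Finset.sum_nonneg fun i _ => abs_nonneg _
      refine ⟨min 1 (|c| / (M + 1)), lt_min one_pos (by positivity), fun t ht0 htδ => ?_⟩
      have ht1 : t ≤ 1 := le_of_lt (lt_of_lt_of_le htδ (min_le_left _ _))
      have htM : t < |c| / (M + 1) := lt_of_lt_of_le htδ (min_le_right _ _)
      have hbound : |t * q.divX.eval t| < |c| := by
        rw [abs_mul, abs_of_pos ht0]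
        calc t * |q.divX.eval t| ≤ t * M :=
              mul_le_mul_of_nonneg_left (abs_eval_le _ (le_of_lt ht0) ht1) (le_of_lt ht0)
          _ ≤ t * (M + 1) := by nlinarith
          _ < |c| := by
              rw [lt_div_iff₀ (by positivity)] at htM
              linarith
      have heval : q.eval t = t * q.divX.eval t + c := by
        conv_lhs => rw [← Polynomial.X_mul_divX_add q]
        rw [Polynomial.eval_add, Polynomial.eval_mul, Polynomial.eval_X, Polynomial.eval_C]
      have hntd : q.natTrailingDegree = 0 :=
        Polynomial.natTrailingDegree_eq_zero.mpr (Or.inr hc0)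
      have htc : q.trailingCoeff = c := by rw [Polynomial.trailingCoeff, hntd]
      rw [heval, htc]
      rcases lt_trichotomy c 0 with hc | hc | hc
      · rw [sign_neg hc, sign_neg]
        have := abs_lt.mp hbound
        rw [abs_of_neg hc] at this
        linarith [this.2]
      · exact absurd hc hc0
      · rw [sign_pos hc, sign_pos]
        have := abs_lt.mp hbound
        rw [abs_of_pos hc] at this
        linarith [this.1]
  exact H _ q rfl hq

/-- On a small interval at the right of `x`, the sign of `P` is constantly the
sign at `x` of the first successive derivative of `P` not vanishing at `x`. -/
theorem sgr_neighpr [RealClosedFieldIVT R] (P : Polynomial R) (x : R) :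
    ∃ δ : R, 0 < δ ∧ ∀ y : R, x < y → y < x + δ →
      SignType.sign (P.eval y) = sgpRight P x := by
  by_cases hP : P = 0
  · subst hP
    exact ⟨1, one_pos, fun y _ _ => by simp [sgpRight, sgpRightAux]⟩
  · have hQ : Polynomial.taylor x P ≠ 0 := fun h =>
      hP (Polynomial.taylor_injective x (by simpa using h))
    obtain ⟨δ, hδ, hsign⟩ := sign_near (Polynomial.taylor x P) hQ
    refine ⟨δ, hδ, fun y hy hyδ => ?_⟩
    have := hsign (y - x) (by linarith) (by linarith)
    rw [Polynomial.taylor_eval_sub] at this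
    rw [this, ← sgpRight_zero_eq_sign_trailingCoeff _ hQ, sgpRight_taylor]
end

section
/- The jump of Q·P'/P at a root x of P equals the sign of Q(x): for P a nonzero polynomial with P(x)=0 and Q any polynomial, jump(Q·P', P, x) = sign(Q(x)), where jump(A, B, x) is defined to be 0 if A = 0 or μ_x(B) − μ_x(A) is nonpositive or even, and otherwise equals the sign of A·B immediately to the right of x. -/
open Polynomial

variable {R : Type*} [Field R] [LinearOrder R] [IsStrictOrderedRing R]

/-- The jump of the rational fraction `A / B` at `x` : it is `0` unless `A ≠ 0`
and `μ_x(B) - μ_x(A)` is positive and odd, in which case it is the sign of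
`A * B` immediately to the right of `x`. -/
noncomputable def jump (A B : Polynomial R) (x : R) : ℤ :=
  let d : ℤ := (B.rootMultiplicity x : ℤ) - (A.rootMultiplicity x : ℤ)
  if A = 0 ∨ d ≤ 0 ∨ Even d then 0 else ((sgpRight (A * B) x : SignType) : ℤ)


lemma deriv_ne_zero {p : Polynomial R} (hp : p ≠ 0) {x : R} (hx : p.eval x = 0) :
    Polynomial.derivative p ≠ 0 ∧ (Polynomial.derivative p).natDegree < p.natDegree := by
  have hd : p.natDegree ≠ 0 := by
    intro h
    rw [Polynomial.eq_C_of_natDegree_eq_zero h] at hp hx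
    simp at hx
    simp [hx] at hp
  constructor
  · intro h
    exact hd (Polynomial.natDegree_eq_zero_of_derivative_eq_zero h)
  · exact Polynomial.natDegree_derivative_lt hd

lemma sgpRightAux_eq (n : ℕ) : ∀ (p : Polynomial R) (x : R), p ≠ 0 → p.natDegree < n →
    sgpRightAux n p x =
      SignType.sign ((Polynomial.derivative^[p.rootMultiplicity x] p).eval x) := by
  induction n with
  | zero => intro p x hp h; omega
  | succ n ih =>
    intro p x hp h
    rw [sgpRightAux, if_neg hp]
    by_cases he : p.eval x = 0
    · rw [if_neg (by simpa using he)]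
      obtain ⟨h1, h2⟩ := deriv_ne_zero hp he
      rw [ih _ x h1 (by omega)]
      have hrm : (Polynomial.derivative p).rootMultiplicity x = p.rootMultiplicity x - 1 :=
        Polynomial.derivative_rootMultiplicity_of_root he
      have hpos : 0 < p.rootMultiplicity x := (Polynomial.rootMultiplicity_pos hp).2 he
      rw [hrm, ← Function.iterate_succ_apply, Nat.succ_eq_add_one, Nat.sub_add_cancel hpos]
    · rw [if_pos (by simpa using he), Polynomial.rootMultiplicity_eq_zero he,
        Function.iterate_zero_apply]

lemma sgpRight_eq_of_factor {g : Polynomial R} {x : R} (hg : g.eval x ≠ 0) (n : ℕ) :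
    sgpRight ((X - C x) ^ n * g) x = SignType.sign (g.eval x) := by
  have hg0 : g ≠ 0 := fun h => hg (by simp [h])
  have hp0 : (X - C x) ^ n * g ≠ 0 :=
    mul_ne_zero (pow_ne_zero _ (Polynomial.X_sub_C_ne_zero x)) hg0
  have hrm : ((X - C x) ^ n * g).rootMultiplicity x = n := by
    rw [Polynomial.rootMultiplicity_mul hp0, Polynomial.rootMultiplicity_X_sub_C_pow,
      Polynomial.rootMultiplicity_eq_zero hg, add_zero]
  rw [sgpRight, sgpRightAux_eq _ _ _ hp0 (by omega), hrm]
  have key := Polynomial.eval_iterate_derivative_rootMultiplicity (p := (X - C x) ^ n * g) (t := x)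
  rw [hrm] at key
  rw [key, Polynomial.mul_divByMonic_cancel_left _ ((monic_X_sub_C x).pow n)]
  rw [nsmul_eq_mul]
  have hfac : (0 : R) < (n.factorial : R) := by positivity
  rw [sign_mul, sign_pos hfac, one_mul]

/-- The jump of `Q * P' / P` at a root `x` of `P` is exactly the sign of `Q x`. -/
theorem jump_mul_deriv [RealClosedFieldIVT R] (P Q : Polynomial R) (x : R)
    (hP : P ≠ 0) (hx : P.eval x = 0) :
    jump (Q * Polynomial.derivative P) P x = ((SignType.sign (Q.eval x) : SignType) : ℤ) := by
  obtain ⟨hd1, _⟩ := deriv_ne_zero hP hx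
  set μ := P.rootMultiplicity x with hμ
  have hμpos : 0 < μ := (Polynomial.rootMultiplicity_pos hP).2 hx
  have hrmd : (Polynomial.derivative P).rootMultiplicity x = μ - 1 :=
    Polynomial.derivative_rootMultiplicity_of_root hx
  by_cases hQ : Q = 0
  · simp [hQ, jump]
  by_cases hQx : Q.eval x = 0
  · have hA : Q * Polynomial.derivative P ≠ 0 := mul_ne_zero hQ hd1
    have hrmA : (Q * Polynomial.derivative P).rootMultiplicity x =
        Q.rootMultiplicity x + (μ - 1) := by
      rw [Polynomial.rootMultiplicity_mul hA, hrmd]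
    have hQpos : 0 < Q.rootMultiplicity x := (Polynomial.rootMultiplicity_pos hQ).2 hQx
    rw [jump, if_pos, sign_eq_zero_iff.mpr hQx]
    · rfl
    · right; left
      rw [hrmA]
      push_cast
      omega
  · -- main case
    have hA : Q * Polynomial.derivative P ≠ 0 := mul_ne_zero hQ hd1
    have hrmA : (Q * Polynomial.derivative P).rootMultiplicity x = μ - 1 := by
      rw [Polynomial.rootMultiplicity_mul hA, hrmd, Polynomial.rootMultiplicity_eq_zero hQx,
        zero_add]
    rw [jump]
    rw [if_neg]
    · -- compute sgpRight
      set g := P /ₘ (X - C x) ^ μ with hg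
      have hPfac : (X - C x) ^ μ * g = P := Polynomial.pow_mul_divByMonic_rootMultiplicity_eq P x
      have hgx : g.eval x ≠ 0 := Polynomial.eval_divByMonic_pow_rootMultiplicity_ne_zero x hP
      have hPder : Polynomial.derivative P =
          (X - C x) ^ (μ - 1) * ((μ : Polynomial R) * g + (X - C x) * Polynomial.derivative g) := by
        conv_lhs => rw [← hPfac]
        rw [derivative_mul, Polynomial.derivative_X_sub_C_pow]
        have hpow : (X - C x) ^ μ = (X - C x) ^ (μ - 1) * (X - C x) := by
          rw [← pow_succ, Nat.sub_add_cancel hμpos]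
        rw [hpow, Polynomial.C_eq_natCast]
        ring
      have hfactor : Q * Polynomial.derivative P * P =
          (X - C x) ^ (μ - 1 + μ) *
            (Q * ((μ : Polynomial R) * g + (X - C x) * Polynomial.derivative g) * g) := by
        conv_lhs => rw [hPder, ← hPfac]
        ring
      rw [hfactor, sgpRight_eq_of_factor]
      · have : (Q * ((μ : Polynomial R) * g + (X - C x) * Polynomial.derivative g) * g).eval x =
            Q.eval x * ((μ : R) * g.eval x ^ 2) := by
          simp [pow_two]
          ring
        have hc : (0:R) < (μ : R) * (g.eval x) ^ 2 := by
          have h1 : (0:R) < (μ : R) := by exact_mod_cast hμpos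
          positivity
        rw [this, sign_mul, sign_pos hc, mul_one]
      · simp only [eval_mul, eval_add, eval_natCast, eval_sub, eval_X, eval_C, sub_self,
          zero_mul, add_zero]
        intro h
        rcases mul_eq_zero.mp h with h | h
        · rcases mul_eq_zero.mp h with h | h
          · exact hQx h
          · rcases mul_eq_zero.mp h with h | h
            · exact hμpos.ne' (by exact_mod_cast h)
            · exact hgx h
        · exact hgx h
    · push_neg
      refine ⟨hA, ?_, ?_⟩
      · rw [hrmA]; push_cast; omega
      · rw [hrmA]
        intro hev
        have : ((μ:ℤ) - (μ - 1 : ℕ)) = 1 := by push_cast; omega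
        rw [this] at hev
        exact ((Int.not_odd_iff_even.mpr hev)) odd_one
end

section
/- The 3×3 matrix M with rows (1,1,1), (−1,1,1), (0,0,1) has determinant 2 and is therefore invertible over any field of characteristic not 2; consequently the vector (#{x∈z: Q(x)>0}, #{x∈z: Q(x)<0}, #{x∈z: Q(x)=0}) is uniquely determined by the Tarski queries (Σ sign Q(x), Σ sign Q(x)², Σ 1) via the linear relation (taq Q, taq Q², taq 1) = (c₊, c₋, c₀) · M. -/
open Polynomial Matrix

private lemma sum_sign_eq {R : Type*} [Field R] [LinearOrder R] [IsStrictOrderedRing R] (Q : Polynomial R) :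
    ∀ z : List R,
      (z.map (fun x => ((SignType.sign (Q.eval x) : SignType) : ℤ))).sum =
        ((z.filter (fun x => 0 < Q.eval x)).length : ℤ) -
        ((z.filter (fun x => Q.eval x < 0)).length : ℤ)
  | [] => by simp
  | a :: z => by
    rw [List.map_cons, List.sum_cons, sum_sign_eq Q z]
    simp only [List.filter_cons]
    rcases lt_trichotomy (Q.eval a) 0 with h | h | h
    · rw [sign_eq_neg_one_iff.2 h]
      simp [h, not_lt.2 h.le]; ring
    · simp [h]
    · rw [sign_eq_one_iff.2 h]
      simp [h, not_lt.2 h.le]; ring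

private lemma sum_sign_sq_eq {R : Type*} [Field R] [LinearOrder R] [IsStrictOrderedRing R] (Q : Polynomial R) :
    ∀ z : List R,
      (z.map (fun x => ((SignType.sign ((Q ^ 2).eval x) : SignType) : ℤ))).sum =
        ((z.filter (fun x => 0 < Q.eval x)).length : ℤ) +
        ((z.filter (fun x => Q.eval x < 0)).length : ℤ)
  | [] => by simp
  | a :: z => by
    rw [List.map_cons, List.sum_cons, sum_sign_sq_eq Q z]
    simp only [List.filter_cons, Polynomial.eval_pow]
    rcases lt_trichotomy (Q.eval a) 0 with h | h | h
    · rw [sign_eq_one_iff.2 (pow_pos (neg_pos.2 h) 2 |>.trans_le (by rw [neg_pow]; simp))]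
      simp [h, not_lt.2 h.le]; ring
    · simp [h]
    · rw [sign_eq_one_iff.2 (pow_pos h 2)]
      simp [h, not_lt.2 h.le]; ring

private lemma sum_sign_one {R : Type*} [Field R] [LinearOrder R] [IsStrictOrderedRing R] (Q : Polynomial R) :
    ∀ z : List R,
      (z.map (fun x => ((SignType.sign ((1 : Polynomial R).eval x) : SignType) : ℤ))).sum =
        ((z.filter (fun x => 0 < Q.eval x)).length : ℤ) +
        ((z.filter (fun x => Q.eval x < 0)).length : ℤ) +
        ((z.filter (fun x => Q.eval x = 0)).length : ℤ)
  | [] => by simp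
  | a :: z => by
    rw [List.map_cons, List.sum_cons, sum_sign_one Q z]
    simp only [List.filter_cons, Polynomial.eval_one,
      sign_eq_one_iff.2 (zero_lt_one' R)]
    rcases lt_trichotomy (Q.eval a) 0 with h | h | h
    · simp [h, not_lt.2 h.le, h.ne]; ring
    · simp [h]; ring
    · simp [h, not_lt.2 h.le, h.ne']; ring


/-- The matrix `ctmat1` has determinant `2`, is invertible over any field of
characteristic different from `2`, and the counting vector
`(c₊, c₋, c₀)` of a polynomial `Q` over a list `z` of points is uniquely
determined by the Tarski queries `(taq Q, taq Q², taq 1)` through the linear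
relation `(taq Q, taq Q², taq 1) = (c₊, c₋, c₀) · ctmat1`. -/
theorem ctmat1_relation {R : Type*} [Field R] [LinearOrder R] [IsStrictOrderedRing R]
    (z : List R) (Q : Polynomial R)
    (M : Matrix (Fin 3) (Fin 3) ℤ)
    (hM : M = !![1, 1, 1; -1, 1, 1; 0, 0, 1])
    (taq : Polynomial R → ℤ)
    (htaq : ∀ P : Polynomial R,
      taq P = (z.map (fun x => ((SignType.sign (P.eval x) : SignType) : ℤ))).sum)
    (c : Fin 3 → ℤ)
    (hc : c = ![((z.filter (fun x => 0 < Q.eval x)).length : ℤ),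
                ((z.filter (fun x => Q.eval x < 0)).length : ℤ),
                ((z.filter (fun x => Q.eval x = 0)).length : ℤ)]) :
    M.det = 2 ∧
    (∀ (F : Type) [Field F], (2 : F) ≠ 0 → IsUnit (M.map (Int.cast : ℤ → F)).det) ∧
    ![taq Q, taq (Q ^ 2), taq 1] = c ᵥ* M ∧
    (∀ c' : Fin 3 → ℤ, ![taq Q, taq (Q ^ 2), taq 1] = c' ᵥ* M → c' = c) := by
  subst hM hc
  have e1 : taq Q = ((z.filter (fun x => 0 < Q.eval x)).length : ℤ) -
      ((z.filter (fun x => Q.eval x < 0)).length : ℤ) := by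
    rw [htaq]; exact sum_sign_eq Q z
  have e2 : taq (Q ^ 2) = ((z.filter (fun x => 0 < Q.eval x)).length : ℤ) +
      ((z.filter (fun x => Q.eval x < 0)).length : ℤ) := by
    rw [htaq]; exact sum_sign_sq_eq Q z
  have e3 : taq 1 = ((z.filter (fun x => 0 < Q.eval x)).length : ℤ) +
      ((z.filter (fun x => Q.eval x < 0)).length : ℤ) +
      ((z.filter (fun x => Q.eval x = 0)).length : ℤ) := by
    rw [htaq]; exact sum_sign_one Q z
  have hdet : (!![1, 1, 1; -1, 1, 1; 0, 0, 1] : Matrix (Fin 3) (Fin 3) ℤ).det = 2 := by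
    decide
  refine ⟨hdet, ?_, ?_, ?_⟩
  · intro F _ h2
    have hd : ((!![1, 1, 1; -1, 1, 1; 0, 0, 1] : Matrix (Fin 3) (Fin 3) ℤ).map
        (Int.cast : ℤ → F)).det = 2 := by
      simp [Matrix.det_fin_three, Matrix.map_apply, Matrix.vecHead, Matrix.vecTail]
      norm_num
    rw [hd]
    exact isUnit_iff_ne_zero.2 h2
  · funext i
    fin_cases i <;>
      simp [Matrix.vecMul, dotProduct, Fin.sum_univ_three, e1, e2, e3] <;> ring
  · intro c' hc'
    have h0 := congrFun hc' 0
    have h1 := congrFun hc' 1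
    have h2 := congrFun hc' 2
    simp [Matrix.vecMul, dotProduct, Fin.sum_univ_three, e1, e2, e3] at h0 h1 h2
    funext i
    fin_cases i <;> simp <;> omega
end
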